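/- arXiv:1010.5212 — 2 statements merged into one kernel-verified Lean document; each statement's English description precedes it below -/
import Mathlib

section
/- For every A ⊆ ℕ, the set R(A) is Turing equivalent to A, and R(A) is generically computable if and only if A is computable. -/
open Filter

open scoped Classical in
/-- `ρ_n(A) = |A ∩ {0,…,n}| / (n+1)`. -/
noncomputable def partialDensity (A : Set ℕ) (n : ℕ) : ℝ :=
  ((Finset.range (n + 1)).filter (· ∈ A)).card / (n + 1)

/-- The upper density of `A`: `limsup_n ρ_n(A)`. -/
noncomputable def upperDensity (A : Set ℕ) : ℝ :=
  Filter.limsup (partialDensity A) Filter.atTop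

/-- `A` has asymptotic density `r`: `ρ_n(A) → r`. -/
def HasDensity (A : Set ℕ) (r : ℝ) : Prop :=
  Filter.Tendsto (partialDensity A) Filter.atTop (nhds r)

open scoped Classical in
/-- The characteristic function of `A` (with values in `{0,1} ⊆ ℕ`). -/
noncomputable def charFun (A : Set ℕ) : ℕ → ℕ := fun n => if n ∈ A then 1 else 0

/-- `Φ` is a generic description of `A`: `Φ(x) = χ_A(x)` whenever `Φ(x)` is defined,
and the domain of `Φ` has density 1. -/
def IsGenericDescription (Φ : ℕ →. ℕ) (A : Set ℕ) : Prop :=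
  (∀ x m, m ∈ Φ x → m = charFun A x) ∧ HasDensity {x | (Φ x).Dom} 1

/-- `A` is generically computable: some partial computable function is a generic
description of `A`. -/
def GenericallyComputable (A : Set ℕ) : Prop :=
  ∃ Φ : ℕ →. ℕ, Partrec Φ ∧ IsGenericDescription Φ A

/-- `A` is computably enumerable: `A` is the domain of a partial computable function. -/
def CE (A : Set ℕ) : Prop :=
  ∃ f : ℕ →. ℕ, Partrec f ∧ A = {x | (f x).Dom}

/-- `A` is a computable set. -/
def ComputableSet (A : Set ℕ) : Prop := ComputablePred (· ∈ A)

/-- `A` is immune: infinite, with no infinite c.e. subset. -/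
def Immune (A : Set ℕ) : Prop :=
  A.Infinite ∧ ∀ W : Set ℕ, CE W → W.Infinite → ¬W ⊆ A

/-- `A` is bi-immune: both `A` and its complement are immune. -/
def BiImmune (A : Set ℕ) : Prop := Immune A ∧ Immune Aᶜ

/-- `A` and `B` are generically similar: their symmetric difference has density 0. -/
def GenericallySimilar (A B : Set ℕ) : Prop := HasDensity (symmDiff A B) 0

/-- `A` is coarsely computable: generically similar to a computable set. -/
def CoarselyComputable (A : Set ℕ) : Prop :=
  ∃ C : Set ℕ, ComputableSet C ∧ GenericallySimilar A C

/-- `R_k = {m : 2^k ∣ m, 2^(k+1) ∤ m}`. -/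
def Rset (k : ℕ) : Set ℕ := {m | 2 ^ k ∣ m ∧ ¬2 ^ (k + 1) ∣ m}

/-- `R(A) = ⋃_{n ∈ A} R_n`. -/
def RofSet (A : Set ℕ) : Set ℕ := ⋃ n ∈ A, Rset n

/-- Partial functions `ℕ →. ℕ` computable relative to a (total) oracle `O : ℕ → ℕ`. -/
inductive RecursiveInOracle (O : ℕ → ℕ) : (ℕ →. ℕ) → Prop
  | zero : RecursiveInOracle O (pure 0)
  | succ : RecursiveInOracle O fun n => Part.some (n + 1)
  | left : RecursiveInOracle O fun n => Part.some (Nat.unpair n).1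
  | right : RecursiveInOracle O fun n => Part.some (Nat.unpair n).2
  | oracle : RecursiveInOracle O fun n => Part.some (O n)
  | pair {f g : ℕ →. ℕ} : RecursiveInOracle O f → RecursiveInOracle O g →
      RecursiveInOracle O fun n => Nat.pair <$> f n <*> g n
  | comp {f g : ℕ →. ℕ} : RecursiveInOracle O f → RecursiveInOracle O g →
      RecursiveInOracle O fun n => g n >>= f
  | prec {f g : ℕ →. ℕ} : RecursiveInOracle O f → RecursiveInOracle O g →
      RecursiveInOracle O (Nat.unpaired fun a n =>
        n.rec (f a) fun y IH => do let i ← IH; g (Nat.pair a (Nat.pair y i)))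
  | rfind {f : ℕ →. ℕ} : RecursiveInOracle O f →
      RecursiveInOracle O fun a => Nat.rfind fun n => (fun m => m = 0) <$> f (Nat.pair a n)

/-- `A ≤_T B`: the characteristic function of `A` is computable relative to `B`. -/
def SetTuringReducible (A B : Set ℕ) : Prop :=
  RecursiveInOracle (charFun B) fun n => Part.some (charFun A n)

/-- `A ≡_T B`. -/
def SetTuringEquivalent (A B : Set ℕ) : Prop :=
  SetTuringReducible A B ∧ SetTuringReducible B A

/-! ### Auxiliary lemmas -/

section Aux

open Nat.Partrec (Code)
open Nat.Partrec.Code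

/-- Oracle-free partial recursive functions are recursive in any oracle. -/
theorem recursiveIn_of_natPartrec {O : ℕ → ℕ} {f : ℕ →. ℕ} (h : Nat.Partrec f) :
    RecursiveInOracle O f := by
  induction h with
  | zero => exact .zero
  | succ => exact .succ
  | left => exact .left
  | right => exact .right
  | pair _ _ ihf ihg => exact .pair ihf ihg
  | comp _ _ ihf ihg => exact .comp ihf ihg
  | prec _ _ ihf ihg => exact .prec ihf ihg
  | rfind _ ihf => exact .rfind ihf

theorem RecursiveInOracle.of_eq {O : ℕ → ℕ} {f g : ℕ →. ℕ} (h : RecursiveInOracle O f)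
    (H : ∀ n, f n = g n) : RecursiveInOracle O g := (funext H : f = g) ▸ h

/-- Master lemma: one oracle query composed with computable pre/post-processing. -/
theorem recursiveIn_query {O : ℕ → ℕ} {g : ℕ → ℕ} {u : ℕ → ℕ → ℕ}
    (hg : Computable g) (hu : Computable₂ u) :
    RecursiveInOracle O fun n => Part.some (u n (O (g n))) := by
  have hid : RecursiveInOracle O (fun n => Part.some n) :=
    recursiveIn_of_natPartrec (Partrec.nat_iff.1 Computable.id)
  have hg' : RecursiveInOracle O (fun n => Part.some (g n)) :=
    recursiveIn_of_natPartrec (Partrec.nat_iff.1 hg)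
  have hog : RecursiveInOracle O (fun n => Part.some (O (g n))) :=
    (RecursiveInOracle.comp .oracle hg').of_eq (fun n => by simp)
  have hpair : RecursiveInOracle O (fun n => Part.some (Nat.pair n (O (g n)))) :=
    (RecursiveInOracle.pair hid hog).of_eq (fun n => by simp [Seq.seq])
  have hu' : RecursiveInOracle O (fun n => Part.some (Nat.unpaired u n)) :=
    recursiveIn_of_natPartrec (Partrec.nat_iff.1
      ((hu.comp (Computable.fst.comp Computable.unpair)
        (Computable.snd.comp Computable.unpair)) : Computable fun n : ℕ => u n.unpair.1 n.unpair.2))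
  exact (RecursiveInOracle.comp hu' hpair).of_eq (fun n => by simp [Nat.unpaired])

/-! ### Facts about `Rset` and `RofSet` -/

theorem mem_Rset_unique {m k k' : ℕ} (h : m ∈ Rset k) (h' : m ∈ Rset k') : k = k' := by
  by_contra hne
  rcases Nat.lt_or_ge k k' with hlt | hge
  · exact h.2 (dvd_trans (pow_dvd_pow 2 hlt) h'.1)
  · exact h'.2 (dvd_trans (pow_dvd_pow 2 (lt_of_le_of_ne hge (Ne.symm hne))) h.1)

theorem mem_RofSet_iff {A : Set ℕ} {m k : ℕ} (h : m ∈ Rset k) :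
    m ∈ RofSet A ↔ k ∈ A := by
  constructor
  · rintro hm
    rcases Set.mem_iUnion₂.1 hm with ⟨n, hn, hmn⟩
    rwa [mem_Rset_unique h hmn] at *
  · intro hk
    exact Set.mem_iUnion₂.2 ⟨k, hk, h⟩

theorem zero_not_mem_RofSet {A : Set ℕ} : (0 : ℕ) ∉ RofSet A := by
  intro h
  rcases Set.mem_iUnion₂.1 h with ⟨n, _, hmn⟩
  exact hmn.2 (dvd_zero _)

theorem two_pow_mem_Rset (n : ℕ) : (2 ^ n : ℕ) ∈ Rset n :=
  ⟨dvd_rfl, fun h => by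
    have := Nat.le_of_dvd (Nat.pos_of_ne_zero (by positivity)) h
    exact absurd this (by simpa using Nat.pow_lt_pow_succ (by norm_num))⟩

/-! ### The 2-adic valuation function -/

theorem nuP_ex (m : ℕ) : ∃ k, m = 0 ∨ ¬ 2 ^ (k + 1) ∣ m := by
  rcases eq_or_ne m 0 with h | h
  · exact ⟨0, Or.inl h⟩
  · refine ⟨m, Or.inr fun hd => ?_⟩
    have h1 := Nat.le_of_dvd (Nat.pos_of_ne_zero h) hd
    have h2 : m < 2 ^ (m + 1) := lt_of_lt_of_le (Nat.lt_two_pow_self (n := m)) (Nat.pow_le_pow_right (by norm_num) (Nat.le_succ m))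
    omega

/-- The 2-adic valuation (with `nu 0 = 0`). -/
def nu (m : ℕ) : ℕ := Nat.find (nuP_ex m)

theorem nu_mem_Rset {m : ℕ} (hm : m ≠ 0) : m ∈ Rset (nu m) := by
  have hmin : ∀ j < nu m, 2 ^ (j + 1) ∣ m := by
    intro j hj
    have := Nat.find_min (nuP_ex m) hj
    push_neg at this
    exact this.2
  constructor
  · rcases Nat.eq_zero_or_pos (nu m) with h | h
    · simp [h]
    · have := hmin (nu m - 1) (by omega)
      rwa [Nat.sub_add_cancel h] at this
  · have := Nat.find_spec (nuP_ex m)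
    tauto

theorem nu_rfind (m : ℕ) :
    (Nat.rfind fun k => Part.some (decide (m = 0 ∨ ¬ 2 ^ (k + 1) ∣ m))) = Part.some (nu m) := by
  rw [Part.eq_some_iff]
  refine Nat.mem_rfind.2 ?_
  constructor
  · simp only [Part.mem_some_iff]
    exact (decide_eq_true (Nat.find_spec (nuP_ex m))).symm
  · intro j hj
    simp only [Part.mem_some_iff]
    have := Nat.find_min (nuP_ex m) hj
    simp [this]

theorem computable_nu : Computable nu := by
  have hpow : Primrec fun p : ℕ × ℕ => 2 ^ (p.2 + 1) :=
    (Primrec₂.unpaired'.1 Nat.Primrec.pow).comp (Primrec.const 2)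
      (Primrec.succ.comp Primrec.snd)
  have hdvd : PrimrecPred fun p : ℕ × ℕ => 2 ^ (p.2 + 1) ∣ p.1 := by
    have : PrimrecPred fun p : ℕ × ℕ => p.1 % 2 ^ (p.2 + 1) = 0 :=
      Primrec.eq.comp (Primrec.nat_mod.comp Primrec.fst hpow) (Primrec.const 0)
    exact this.of_eq fun p => (Nat.dvd_iff_mod_eq_zero).symm
  have hzero : PrimrecPred fun p : ℕ × ℕ => p.1 = 0 :=
    Primrec.eq.comp Primrec.fst (Primrec.const 0)
  have hP : PrimrecPred fun p : ℕ × ℕ => p.1 = 0 ∨ ¬ 2 ^ (p.2 + 1) ∣ p.1 :=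
    hzero.or hdvd.not
  have hP2 : Computable₂ fun m k : ℕ => (decide (m = 0 ∨ ¬ 2 ^ (k + 1) ∣ m) : Bool) :=
    (hP.decide.to_comp).to₂
  have hrf : Partrec fun m => Nat.rfind fun k =>
      (Part.some (decide (m = 0 ∨ ¬ 2 ^ (k + 1) ∣ m)) : Part Bool) :=
    Partrec.rfind ((hP2.partrec₂).of_eq fun m => rfl)
  exact hrf.of_eq_tot fun m => by rw [nu_rfind]; exact Part.mem_some _

/-! ### Density lemmas -/

theorem hasDensity_univ : HasDensity (Set.univ : Set ℕ) 1 := by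
  have : ∀ n, partialDensity (Set.univ : Set ℕ) n = 1 := by
    intro n
    simp only [partialDensity, Set.mem_univ, Finset.filter_true, Finset.card_range]
    push_cast
    rw [div_self]
    exact Nat.cast_add_one_ne_zero n
  exact Filter.Tendsto.congr (fun n => (this n).symm) tendsto_const_nhds

theorem density_one_meets_Rset {D : Set ℕ} (hD : HasDensity D 1) (k : ℕ) :
    ∃ m, m ∈ Rset k ∧ m ∈ D := by
  classical
  by_contra hcon
  push_neg at hcon
  set K := 2 ^ (k + 1) with hKdef
  have hK2 : 2 ≤ K := by
    calc 2 = 2 ^ 1 := (pow_one 2).symm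
    _ ≤ K := Nat.pow_le_pow_right (by norm_num) (by omega)
  have key : ∀ t : ℕ, partialDensity D (K * (t + 1) - 1) ≤ 1 - 1 / (K : ℝ) := by
    intro t
    set N := K * (t + 1) with hNdef
    have hNpos : 0 < N := by positivity
    have hNe : N - 1 + 1 = N := Nat.succ_pred_eq_of_pos hNpos
    have hcardR : t + 1 ≤ ((Finset.range N).filter (· ∈ Rset k)).card := by
      have : ((Finset.range (t + 1)).image fun j => 2 ^ k * (2 * j + 1)) ⊆
          (Finset.range N).filter (· ∈ Rset k) := by
        intro x hx
        rcases Finset.mem_image.1 hx with ⟨j, hj, rfl⟩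
        have hjlt : j < t + 1 := Finset.mem_range.1 hj
        refine Finset.mem_filter.2 ⟨Finset.mem_range.2 ?_, ?_, ?_⟩
        · have : 2 * j + 1 < 2 * (t + 1) := by omega
          have h2k : 0 < (2:ℕ) ^ k := pow_pos (by norm_num) k
          calc 2 ^ k * (2 * j + 1) < 2 ^ k * (2 * (t + 1)) :=
                (Nat.mul_lt_mul_left h2k).2 this
          _ = N := by rw [hNdef, hKdef]; ring
        · exact Dvd.intro _ rfl
        · intro hd
          rw [pow_succ] at hd
          have h2 : (2 : ℕ) ∣ 2 * j + 1 :=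
            (Nat.mul_dvd_mul_iff_left (pow_pos (by norm_num : (0:ℕ) < 2) k)).1 hd
          omega
      calc t + 1 = ((Finset.range (t + 1)).image fun j => 2 ^ k * (2 * j + 1)).card := by
            rw [Finset.card_image_of_injective _ ?_, Finset.card_range]
            intro a b hab
            have := Nat.eq_of_mul_eq_mul_left (pow_pos (by norm_num : (0:ℕ) < 2) k) hab
            omega
      _ ≤ _ := Finset.card_le_card this
    have hdisj : Disjoint ((Finset.range N).filter (· ∈ D))
        ((Finset.range N).filter (· ∈ Rset k)) := by
      rw [Finset.disjoint_left]
      intro a ha hb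
      exact hcon a (Finset.mem_filter.1 hb).2 (Finset.mem_filter.1 ha).2
    have hsum : ((Finset.range N).filter (· ∈ D)).card +
        ((Finset.range N).filter (· ∈ Rset k)).card ≤ N := by
      rw [← Finset.card_union_of_disjoint hdisj]
      calc _ ≤ (Finset.range N).card := Finset.card_le_card
              (Finset.union_subset (Finset.filter_subset _ _) (Finset.filter_subset _ _))
      _ = N := Finset.card_range N
    have hcardD : ((Finset.range N).filter (· ∈ D)).card ≤ N - (t + 1) := by omega
    have htN : t + 1 ≤ N := by
      calc t + 1 ≤ 2 * (t + 1) := by omega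
      _ ≤ N := by rw [hNdef]; exact Nat.mul_le_mul_right _ hK2
    have hNR : (0 : ℝ) < (N : ℝ) := by exact_mod_cast hNpos
    have hKR : (0 : ℝ) < (K : ℝ) := by exact_mod_cast lt_of_lt_of_le (by norm_num) hK2
    have hcast : (((Finset.range N).filter (· ∈ D)).card : ℝ) ≤ (N : ℝ) - ((t : ℝ) + 1) := by
      have h1 : (((Finset.range N).filter (· ∈ D)).card : ℝ) ≤ ((N - (t + 1) : ℕ) : ℝ) := by
        exact_mod_cast hcardD
      rwa [Nat.cast_sub htN, Nat.cast_add, Nat.cast_one] at h1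
    unfold partialDensity
    rw [hNe]
    have hden : ((N - 1 : ℕ) : ℝ) + 1 = (N : ℝ) := by
      rw [← Nat.cast_succ, Nat.succ_eq_add_one, hNe]
    rw [hden, div_le_iff₀ hNR]
    have hKN : (N : ℝ) = (K : ℝ) * ((t : ℝ) + 1) := by rw [hNdef]; push_cast; ring
    have heq : (1 - 1 / (K : ℝ)) * (N : ℝ) = (N : ℝ) - ((t : ℝ) + 1) := by
      rw [hKN]; field_simp
    rw [heq]
    exact hcast
  have harg : Filter.Tendsto (fun t : ℕ => K * (t + 1) - 1) atTop atTop := by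
    apply Filter.tendsto_atTop_mono (f := fun t : ℕ => t)
    · intro t
      have : 2 * (t + 1) ≤ K * (t + 1) := Nat.mul_le_mul_right _ hK2
      omega
    · exact Filter.tendsto_id
  have h2 : Filter.Tendsto (fun t : ℕ => partialDensity D (K * (t + 1) - 1)) atTop (nhds 1) :=
    hD.comp harg
  have hle : (1 : ℝ) ≤ 1 - 1 / (K : ℝ) :=
    le_of_tendsto h2 (Filter.Eventually.of_forall key)
  have hKpos : (0 : ℝ) < 1 / (K : ℝ) := by
    apply div_pos one_pos
    exact_mod_cast lt_of_lt_of_le (by norm_num) hK2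
  linarith

end Aux


/-- `R(A)` is Turing equivalent to `A`, and `R(A)` is generically
computable iff `A` is computable. -/
theorem stmt7 (A : Set ℕ) :
    SetTuringEquivalent (RofSet A) A ∧
      (GenericallyComputable (RofSet A) ↔ ComputableSet A) := by
  classical
  have hcharR : ∀ m : ℕ, m ≠ 0 → charFun (RofSet A) m = charFun A (nu m) := by
    intro m hm
    have h := mem_RofSet_iff (A := A) (nu_mem_Rset hm)
    by_cases hA : nu m ∈ A <;> simp [charFun, h, hA]
  constructor
  · constructor
    · -- RofSet A ≤_T A
      refine (recursiveIn_query (O := charFun A) (g := nu)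
        (u := fun m y => if m = 0 then 0 else y) computable_nu ?_).of_eq ?_
      · exact (Primrec.ite (Primrec.eq.comp Primrec.fst (Primrec.const 0))
          (Primrec.const 0) Primrec.snd).to_comp.to₂
      · intro n
        rcases eq_or_ne n 0 with rfl | hn
        · simp [charFun, zero_not_mem_RofSet]
        · simp [hn, hcharR n hn]
    · -- A ≤_T RofSet A
      refine (recursiveIn_query (O := charFun (RofSet A)) (g := fun n => 2 ^ n)
        (u := fun _ y => y) ?_ ?_).of_eq ?_
      · exact ((Primrec₂.unpaired'.1 Nat.Primrec.pow).comp (Primrec.const 2)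
          Primrec.id).to_comp
      · exact Computable.snd.to₂
      · intro n
        have h := mem_RofSet_iff (A := A) (two_pow_mem_Rset n)
        by_cases hA : n ∈ A <;> simp [charFun, h, hA]
  constructor
  · -- generically computable → computable
    rintro ⟨Φ, hΦ, hcorr, hdom⟩
    obtain ⟨c, hc⟩ := Nat.Partrec.Code.exists_code.1 (Partrec.nat_iff.1 hΦ)
    set F : ℕ → ℕ → Option ℕ := fun k n =>
      if (2 : ℕ) ^ k ∣ n.unpair.1 ∧ ¬ (2 : ℕ) ^ (k + 1) ∣ n.unpair.1 then
        Nat.Partrec.Code.evaln n.unpair.2 c n.unpair.1 else none with hFdef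
    have hm1 : Primrec fun p : ℕ × ℕ => p.2.unpair.1 :=
      Primrec.fst.comp (Primrec.unpair.comp Primrec.snd)
    have hs1 : Primrec fun p : ℕ × ℕ => p.2.unpair.2 :=
      Primrec.snd.comp (Primrec.unpair.comp Primrec.snd)
    have hpow1 : Primrec fun p : ℕ × ℕ => (2 : ℕ) ^ p.1 :=
      (Primrec₂.unpaired'.1 Nat.Primrec.pow).comp (Primrec.const 2) Primrec.fst
    have hpow2 : Primrec fun p : ℕ × ℕ => (2 : ℕ) ^ (p.1 + 1) :=
      (Primrec₂.unpaired'.1 Nat.Primrec.pow).comp (Primrec.const 2)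
        (Primrec.succ.comp Primrec.fst)
    have hdvd1 : PrimrecPred fun p : ℕ × ℕ => (2 : ℕ) ^ p.1 ∣ p.2.unpair.1 :=
      (Primrec.eq.comp (Primrec.nat_mod.comp hm1 hpow1) (Primrec.const 0)).of_eq
        fun p => (Nat.dvd_iff_mod_eq_zero).symm
    have hdvd2 : PrimrecPred fun p : ℕ × ℕ => (2 : ℕ) ^ (p.1 + 1) ∣ p.2.unpair.1 :=
      (Primrec.eq.comp (Primrec.nat_mod.comp hm1 hpow2) (Primrec.const 0)).of_eq
        fun p => (Nat.dvd_iff_mod_eq_zero).symm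
    have hev : Primrec fun p : ℕ × ℕ => Nat.Partrec.Code.evaln p.2.unpair.2 c p.2.unpair.1 :=
      Nat.Partrec.Code.primrec_evaln.comp ((hs1.pair (Primrec.const c)).pair hm1)
    have hFcomp : Computable₂ F :=
      ((Primrec.ite (hdvd1.and hdvd2.not) hev (Primrec.const none)).to_comp).to₂
    have hG : Partrec fun k => (Nat.rfindOpt (F k)).map fun v => v == 1 :=
      (Partrec.rfindOpt hFcomp).map
        ((Primrec.beq.comp Primrec.snd (Primrec.const 1)).to_comp.to₂)
    have key : ∀ k, ((Nat.rfindOpt (F k)).map fun v => v == 1) = Part.some (decide (k ∈ A)) := by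
      intro k
      obtain ⟨m, hmR, hmD⟩ := density_one_meets_Rset hdom k
      obtain ⟨v, hv⟩ : ∃ v, v ∈ Φ m := Part.dom_iff_mem.1 hmD
      rw [← hc] at hv
      obtain ⟨s, hs⟩ := Nat.Partrec.Code.evaln_complete.1 hv
      have hFn : v ∈ F k (Nat.pair m s) := by
        have hEq : F k (Nat.pair m s) = Nat.Partrec.Code.evaln s c m := by
          rw [hFdef]
          simp only [Nat.unpair_pair]
          rw [if_pos ⟨hmR.1, hmR.2⟩]
        rw [hEq]
        exact hs
      have hdomOpt : (Nat.rfindOpt (F k)).Dom := Nat.rfindOpt_dom.2 ⟨_, _, hFn⟩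
      have hvals : ∀ a ∈ Nat.rfindOpt (F k), a = charFun A k := by
        intro a ha
        obtain ⟨n, hn⟩ := Nat.rfindOpt_spec ha
        by_cases hcond : (2 : ℕ) ^ k ∣ n.unpair.1 ∧ ¬ (2 : ℕ) ^ (k + 1) ∣ n.unpair.1
        · have hn' : a ∈ Nat.Partrec.Code.evaln n.unpair.2 c n.unpair.1 := by
            rw [hFdef] at hn
            simp only at hn
            rwa [if_pos hcond] at hn
          have haΦ : a ∈ Φ n.unpair.1 := by
            rw [← hc]; exact Nat.Partrec.Code.evaln_sound hn'
          have ha' := hcorr _ _ haΦ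
          have hmem := mem_RofSet_iff (A := A) (hcond : n.unpair.1 ∈ Rset k)
          by_cases hk : k ∈ A <;>
            simp [charFun, hmem, hk] at ha' ⊢ <;> exact ha'
        · rw [hFdef] at hn
          simp only at hn
          rw [if_neg hcond] at hn
          exact absurd hn (by simp)
      rw [Part.eq_some_iff]
      refine (Part.mem_map_iff _).2 ⟨(Nat.rfindOpt (F k)).get hdomOpt, Part.get_mem _, ?_⟩
      have := hvals _ (Part.get_mem hdomOpt)
      rw [this]
      by_cases hk : k ∈ A <;> simp [charFun, hk]
    have hcmp : Computable fun k => decide (k ∈ A) :=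
      Partrec.of_eq_tot hG fun k => by rw [key k]; exact Part.mem_some _
    exact ComputablePred.computable_iff.2 ⟨_, hcmp, by funext a; simp⟩
  · -- computable → generically computable
    intro hA
    obtain ⟨f, hf, hfp⟩ := ComputablePred.computable_iff.1 hA
    have hfA : ∀ x, x ∈ A ↔ f x = true := fun x => by
      conv_lhs => rw [show (x ∈ A) = (f x : Prop) from congrFun hfp x]
    set G : ℕ → ℕ := fun m => cond (m == 0) 0 (cond (f (nu m)) 1 0) with hGdef
    have hGcomp : Computable G :=
      Computable.cond ((Primrec.beq.comp Primrec.id (Primrec.const 0)).to_comp)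
        (Computable.const 0)
        (Computable.cond (hf.comp computable_nu) (Computable.const 1) (Computable.const 0))
    refine ⟨fun m => Part.some (G m), hGcomp.partrec, ?_, ?_⟩
    · intro x m hm
      rw [Part.mem_some_iff] at hm
      subst hm
      rcases eq_or_ne x 0 with rfl | hx
      · simp [hGdef, charFun, zero_not_mem_RofSet]
      · have h1 := hcharR x hx
        have hGx : G x = (bif f (nu x) then 1 else 0) := by
          rw [hGdef]
          simp only [cond_eq_if, beq_iff_eq]
          rw [if_neg hx]
        rw [hGx, h1]
        cases hfx : f (nu x)
        · have hnA : nu x ∉ A := fun h => by simp [(hfA _).1 h] at hfx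
          simp [charFun, hnA]
        · simp [charFun, (hfA _).2 hfx]
    · have : {x : ℕ | (Part.some (G x)).Dom} = Set.univ := by
        ext x; simp
      rw [this]
      exact hasDensity_univ
end

section
/- For every A ⊆ ℕ, the set R(A) is coarsely computable if and only if A is limit computable, i.e. there is a computable function g : ℕ × ℕ → {0,1} such that for every n, g(n,s) = χ_A(n) for all sufficiently large s (equivalently, A ≤_T 0′). -/
open Filter

/-- `A` is limit computable. -/
def LimitComputable (A : Set ℕ) : Prop :=
  ∃ g : ℕ → ℕ → Bool, Computable₂ g ∧
    ∀ n : ℕ, ∀ᶠ s in Filter.atTop, (g n s = true ↔ n ∈ A)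

namespace Stmt11Aux


lemma p_mem_Rset (n j : ℕ) : 2 ^ n * (2 * j + 1) ∈ Rset n := by
  refine ⟨Dvd.intro _ rfl, fun h => ?_⟩
  rw [pow_succ] at h
  have h2 : (2:ℕ) ∣ 2 * j + 1 := (mul_dvd_mul_iff_left (a := (2:ℕ)^n) (by positivity)).1 h
  omega

lemma ne_zero_of_mem {m n : ℕ} (h : m ∈ Rset n) : m ≠ 0 := by
  rintro rfl; exact h.2 (dvd_zero _)

lemma eq_of_mem {m n n' : ℕ} (h : m ∈ Rset n) (h' : m ∈ Rset n') : n = n' := by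
  by_contra hne
  rcases Nat.lt_or_ge n n' with hlt | hge
  · exact h.2 ((pow_dvd_pow 2 (by omega)).trans h'.1)
  · exact h'.2 ((pow_dvd_pow 2 (by omega)).trans h.1)

lemma lt_of_mem {m n : ℕ} (h : m ∈ Rset n) : n < m :=
  lt_of_lt_of_le (Nat.lt_two_pow_self (n := n)) (Nat.le_of_dvd (Nat.pos_of_ne_zero (ne_zero_of_mem h)) h.1)

lemma mem_RofSet_iff {A : Set ℕ} {m n : ℕ} (h : m ∈ Rset n) : m ∈ RofSet A ↔ n ∈ A := by
  simp only [RofSet, Set.mem_iUnion, exists_prop]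
  exact ⟨fun ⟨k, hk, hm⟩ => (eq_of_mem h hm) ▸ hk, fun hn => ⟨n, hn, h⟩⟩

lemma zero_not_mem_RofSet (A : Set ℕ) : 0 ∉ RofSet A := by
  simp only [RofSet, Set.mem_iUnion, exists_prop, not_exists]
  rintro k ⟨-, hk⟩
  exact hk.2 (dvd_zero _)

lemma mem_Rset_padic {m : ℕ} (hm : m ≠ 0) : m ∈ Rset (padicValNat 2 m) :=
  ⟨pow_padicValNat_dvd, pow_succ_padicValNat_not_dvd hm⟩

/-- partial sums, computably -/
def psum (v : ℕ → ℕ → ℕ) (n s : ℕ) : ℕ :=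
  Nat.rec (v n 0) (fun j IH => IH + v n (j + 1)) s

lemma psum_eq (v : ℕ → ℕ → ℕ) (n s : ℕ) :
    psum v n s = ∑ j ∈ Finset.range (s + 1), v n j := by
  induction s with
  | zero => simp [psum]
  | succ s ih => rw [Finset.sum_range_succ, ← ih]; rfl

lemma psum_computable {v : ℕ → ℕ → ℕ} (hv : Computable₂ v) : Computable₂ (psum v) := by
  have hh : Computable₂ fun (a : ℕ × ℕ) (p : ℕ × ℕ) => p.2 + v a.1 (p.1 + 1) :=
    (Primrec.nat_add.to_comp.comp (Computable.snd.comp Computable.snd)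
      (hv.comp (Computable.fst.comp Computable.fst)
        (Computable.succ.comp (Computable.fst.comp Computable.snd)))).to₂
  have := Computable.nat_rec (f := fun a : ℕ × ℕ => a.2) (g := fun a : ℕ × ℕ => v a.1 0)
    Computable.snd (hv.comp Computable.fst (Computable.const 0)) hh
  exact this.to₂

open scoped Classical in
lemma card_dvd_le (k N : ℕ) :
    ((Finset.range (N + 1)).filter (fun m => 2 ^ k ∣ m)).card ≤ N / 2 ^ k + 1 := by
  have h := Finset.card_le_card_of_injOn (fun m => m / 2 ^ k)
    (s := (Finset.range (N + 1)).filter (fun m => 2 ^ k ∣ m))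
    (t := Finset.range (N / 2 ^ k + 1))
    (fun m hm => by
      simp only [Finset.mem_coe, Finset.mem_filter, Finset.mem_range] at hm ⊢
      have := Nat.div_le_div_right (c := 2 ^ k) (Nat.lt_succ_iff.1 hm.1)
      omega)
    (fun a ha b hb hab => by
      simp only [Finset.coe_filter, Set.mem_setOf_eq, Finset.mem_range] at ha hb
      have hab2 : a / 2 ^ k = b / 2 ^ k := hab
      rw [← Nat.mul_div_cancel' ha.2, ← Nat.mul_div_cancel' hb.2, hab2])
  simpa using h


lemma partialDensity_nonneg (D : Set ℕ) (n : ℕ) : 0 ≤ partialDensity D n := by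
  unfold partialDensity; positivity

open scoped Classical in
lemma partialDensity_eq (D : Set ℕ) (n : ℕ) :
    partialDensity D n = (((Finset.range (n + 1)).filter (· ∈ D)).card : ℝ) / ((n : ℝ) + 1) := by
  rw [partialDensity]

open scoped Classical in
lemma backward {A : Set ℕ} (h : LimitComputable A) : CoarselyComputable (RofSet A) := by
  obtain ⟨g, hgc, hg⟩ := h
  choose sb hsb using fun n => eventually_atTop.1 (hg n)
  -- the 2-adic valuation, computably
  set b : ℕ → ℕ → ℕ := fun m k => if m % 2 ^ k = 0 then 1 else 0 with hbdef
  have hbc : Computable₂ b := by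
    have : Primrec fun p : ℕ × ℕ => if p.1 % 2 ^ p.2 = 0 then 1 else 0 :=
      Primrec.ite
        (Primrec.eq.comp
          (Primrec.nat_mod.comp Primrec.fst
            ((Primrec₂.unpaired'.1 Nat.Primrec.pow).comp (Primrec.const 2) Primrec.snd))
          (Primrec.const 0))
        (Primrec.const 1) (Primrec.const 0)
    exact this.to_comp.to₂
  set nu : ℕ → ℕ := fun m => psum b m m - 1 with hnudef
  have hnuc : Computable nu :=
    Primrec.nat_sub.to_comp.comp
      ((psum_computable hbc).comp Computable.id Computable.id) (Computable.const 1)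
  have hnu_eq : ∀ {m n : ℕ}, m ∈ Rset n → nu m = n := by
    intro m n hmn
    have hnm : n < m := lt_of_mem hmn
    have hfil : (Finset.range (m + 1)).filter (fun k => m % 2 ^ k = 0) =
        Finset.range (n + 1) := by
      ext k
      simp only [Finset.mem_filter, Finset.mem_range]
      constructor
      · rintro ⟨hk, hmod⟩
        by_contra hkn
        exact hmn.2 ((pow_dvd_pow 2 (show n + 1 ≤ k by omega)).trans
          (Nat.dvd_of_mod_eq_zero hmod))
      · intro hk
        exact ⟨by omega, Nat.mod_eq_zero_of_dvd
          ((pow_dvd_pow 2 (show k ≤ n by omega)).trans hmn.1)⟩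
    have hps : psum b m m = n + 1 := by
      rw [psum_eq, hbdef]
      rw [← Finset.card_filter, hfil, Finset.card_range]
    rw [hnudef]; simp [hps]
  -- the coarse description C
  set hCf : ℕ → Bool := fun m => if m = 0 then false else g (nu m) m with hCfdef
  have hCfc : Computable hCf := by
    have hc : Computable fun m : ℕ => decide (m = 0) :=
      (Primrec.eq.comp Primrec.id (Primrec.const 0)).decide.to_comp
    have := Computable.cond hc (Computable.const false)
      (hgc.comp hnuc Computable.id)
    exact this.of_eq fun m => by by_cases hm : m = 0 <;> simp [hCfdef, hm]
  set C : Set ℕ := {m | hCf m = true} with hCdef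
  have hmemC : ∀ {m n : ℕ}, m ∈ Rset n → (m ∈ C ↔ g n m = true) := by
    intro m n hmn
    have hm0 : m ≠ 0 := ne_zero_of_mem hmn
    simp [hCdef, hCfdef, hm0, hnu_eq hmn]
  refine ⟨C, ComputablePred.computable_iff.2 ⟨hCf, hCfc, rfl⟩, ?_⟩
  -- density-zero of the symmetric difference
  set D : Set ℕ := symmDiff (RofSet A) C with hDdef
  have key : ∀ m ∈ D, ∃ n, m ∈ Rset n ∧ m < sb n := by
    intro m hmD
    have hm0 : m ≠ 0 := by
      rintro rfl
      rcases Set.mem_symmDiff.1 hmD with ⟨h1, -⟩ | ⟨h1, -⟩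
      · exact zero_not_mem_RofSet A h1
      · simp [hCdef, hCfdef] at h1
    refine ⟨padicValNat 2 m, mem_Rset_padic hm0, ?_⟩
    by_contra hge
    push_neg at hge
    have hst := hsb _ m hge
    have h1 := mem_RofSet_iff (A := A) (mem_Rset_padic hm0)
    have h2 := hmemC (mem_Rset_padic hm0)
    rcases Set.mem_symmDiff.1 hmD with ⟨ha, hc⟩ | ⟨hc, ha⟩
    · exact hc (h2.2 (hst.2 (h1.1 ha)))
    · exact ha (h1.2 (hst.1 (h2.1 hc)))
  have hsubset : ∀ k N : ℕ, ((Finset.range (N + 1)).filter (· ∈ D)).card ≤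
      (Finset.range k).sup sb + (N / 2 ^ k + 1) := by
    intro k N
    have hsub : (Finset.range (N + 1)).filter (· ∈ D) ⊆
        Finset.range ((Finset.range k).sup sb) ∪
          (Finset.range (N + 1)).filter (fun m => 2 ^ k ∣ m) := by
      intro m hm
      simp only [Finset.mem_filter, Finset.mem_range, Finset.mem_union] at hm ⊢
      obtain ⟨n, hRn, hlt⟩ := key m hm.2
      by_cases hnk : n < k
      · exact Or.inl (lt_of_lt_of_le hlt (Finset.le_sup (Finset.mem_range.2 hnk)))
      · exact Or.inr ⟨hm.1, (pow_dvd_pow 2 (show k ≤ n by omega)).trans hRn.1⟩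
    calc ((Finset.range (N + 1)).filter (· ∈ D)).card
        ≤ _ := Finset.card_le_card hsub
      _ ≤ (Finset.range ((Finset.range k).sup sb)).card +
            ((Finset.range (N + 1)).filter (fun m => 2 ^ k ∣ m)).card :=
          Finset.card_union_le _ _
      _ ≤ (Finset.range k).sup sb + (N / 2 ^ k + 1) := by
          rw [Finset.card_range]
          exact Nat.add_le_add_left (card_dvd_le k N) _
  show Tendsto (partialDensity D) atTop (nhds 0)
  rw [Metric.tendsto_atTop]
  intro ε hε
  obtain ⟨k, hk⟩ := exists_nat_one_div_lt (half_pos hε)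
  have h2k : ((k : ℝ) + 1) ≤ 2 ^ k := by
    have := Nat.lt_two_pow_self (n := k)
    exact_mod_cast this
  have hk2 : (1 : ℝ) / 2 ^ k < ε / 2 :=
    lt_of_le_of_lt (one_div_le_one_div_of_le (by positivity) h2k) hk
  set S : ℕ := (Finset.range k).sup sb with hSdef
  obtain ⟨N₀, hN₀⟩ := exists_nat_gt (((S : ℝ) + 1) * 2 / ε)
  refine ⟨N₀, fun N hN => ?_⟩
  have hNN : ((S : ℝ) + 1) * 2 / ε < (N : ℝ) + 1 := by
    have : (N₀ : ℝ) ≤ N := by exact_mod_cast hN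
    linarith
  have hpd0 : 0 ≤ partialDensity D N := partialDensity_nonneg D N
  rw [Real.dist_eq, sub_zero, abs_of_nonneg hpd0]
  have hcard : (((Finset.range (N + 1)).filter (· ∈ D)).card : ℝ) ≤
      (S : ℝ) + ((N / 2 ^ k : ℕ) : ℝ) + 1 := by
    have := hsubset k N
    push_cast
    exact_mod_cast this
  have hdiv : ((N / 2 ^ k : ℕ) : ℝ) ≤ (N : ℝ) / 2 ^ k := by
    have := Nat.cast_div_le (m := N) (n := 2 ^ k) (α := ℝ)
    simpa using this
  have hNpos : (0 : ℝ) < (N : ℝ) + 1 := by positivity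
  rw [partialDensity_eq]
  have hne1 : ((N : ℝ) + 1) ≠ 0 := by positivity
  have hne2 : ((2 : ℝ) ^ k) ≠ 0 := by positivity
  have hfrac : (((Finset.range (N + 1)).filter (· ∈ D)).card : ℝ) / ((N : ℝ) + 1) ≤
      ((S : ℝ) + 1) / ((N : ℝ) + 1) + 1 / 2 ^ k := by
    calc (((Finset.range (N + 1)).filter (· ∈ D)).card : ℝ) / ((N : ℝ) + 1)
        ≤ (((S : ℝ) + 1) + ((N : ℝ) + 1) / 2 ^ k) / ((N : ℝ) + 1) := by
          gcongr
          have h2 : (N : ℝ) / 2 ^ k ≤ ((N : ℝ) + 1) / 2 ^ k := by gcongr; linarith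
          linarith [hcard, hdiv]
      _ = ((S : ℝ) + 1) / ((N : ℝ) + 1) + 1 / 2 ^ k := by
          rw [add_div]
          congr 1
          rw [div_div, mul_comm, ← div_div, div_self hne1]
  have h1 : ((S : ℝ) + 1) / ((N : ℝ) + 1) < ε / 2 := by
    rw [div_lt_iff₀ hNpos]
    have h2 := (div_lt_iff₀ (show (0 : ℝ) < ε by linarith)).1 hNN
    linarith
  linarith [hfrac, h1, hk2]

open scoped Classical in
lemma forward {A : Set ℕ} (h : CoarselyComputable (RofSet A)) : LimitComputable A := by
  obtain ⟨C, hC, hsim⟩ := h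
  obtain ⟨fC, hfC, hCeq⟩ := ComputablePred.computable_iff.1 hC
  have hmemC : ∀ m : ℕ, m ∈ C ↔ fC m = true := fun m => iff_of_eq (congrFun hCeq m)
  set D : Set ℕ := symmDiff (RofSet A) C with hDdef
  set v : ℕ → ℕ → ℕ := fun n j => cond (fC (2 ^ n * (2 * j + 1))) 1 0 with hvdef
  have hp : Computable fun a : ℕ × ℕ => 2 ^ a.1 * (2 * a.2 + 1) :=
    (Primrec.nat_mul.comp
      ((Primrec₂.unpaired'.1 Nat.Primrec.pow).comp (Primrec.const 2) Primrec.fst)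
      (Primrec.succ.comp (Primrec.nat_mul.comp (Primrec.const 2) Primrec.snd))).to_comp
  have hvc : Computable₂ v :=
    (Computable.cond (hfC.comp hp) (Computable.const 1) (Computable.const 0)).to₂
  set g : ℕ → ℕ → Bool := fun n s => decide (s + 1 < 2 * psum v n s) with hgdef
  have hgc : Computable₂ g :=
    (Primrec.nat_lt.decide.to_comp.comp (Computable.succ.comp Computable.snd)
      (Primrec.nat_mul.to_comp.comp (Computable.const 2)
        ((psum_computable hvc).comp Computable.fst Computable.snd))).to₂
  refine ⟨g, hgc, fun n => ?_⟩
  obtain ⟨N₀, hN₀⟩ := Metric.tendsto_atTop.1 hsim ((1 : ℝ) / 2 ^ (n + 2)) (by positivity)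
  rw [eventually_atTop]
  refine ⟨N₀, fun s hs => ?_⟩
  set B : ℕ := 2 ^ (n + 1) * (s + 1) with hBdef
  have hB1 : 1 ≤ B := Nat.mul_pos (pow_pos (by norm_num) _) (Nat.succ_pos s)
  have hBs : s + 1 ≤ B := by
    calc s + 1 = 1 * (s + 1) := (one_mul _).symm
    _ ≤ 2 ^ (n + 1) * (s + 1) := Nat.mul_le_mul_right _ (Nat.one_le_two_pow)
  have hBN : B - 1 ≥ N₀ := by omega
  have hd := hN₀ (B - 1) hBN
  have hBB : (B - 1) + 1 = B := Nat.succ_pred_eq_of_pos hB1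
  have hcast : ((B - 1 : ℕ) : ℝ) + 1 = (B : ℝ) := by exact_mod_cast congrArg (Nat.cast (R := ℝ)) hBB
  have hpd : partialDensity D (B - 1) =
      (((Finset.range B).filter (· ∈ D)).card : ℝ) / (B : ℝ) := by
    rw [partialDensity_eq, hBB, hcast]
  rw [hpd, Real.dist_eq, sub_zero, abs_of_nonneg (by positivity)] at hd
  have hBpos : (0 : ℝ) < (B : ℝ) := by exact_mod_cast hB1
  have hBval : (B : ℝ) = 2 ^ (n + 1) * ((s : ℝ) + 1) := by rw [hBdef]; push_cast; ring
  have hcD : ((((Finset.range B).filter (· ∈ D)).card : ℝ)) < ((s : ℝ) + 1) / 2 := by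
    have h2 := (div_lt_iff₀ hBpos).1 hd
    have : (1 : ℝ) / 2 ^ (n + 2) * (B : ℝ) = ((s : ℝ) + 1) / 2 := by
      rw [hBval, pow_succ]
      field_simp
    linarith [h2, this ▸ h2]
  have h2e : 2 * (((Finset.range B).filter (· ∈ D)).card) < s + 1 := by
    have : (2 * ((((Finset.range B).filter (· ∈ D)).card) : ℝ)) < (s : ℝ) + 1 := by linarith
    exact_mod_cast this
  -- the errors among the first s+1 elements of R_n
  have he : ((Finset.range (s + 1)).filter (fun j => 2 ^ n * (2 * j + 1) ∈ D)).card ≤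
      ((Finset.range B).filter (· ∈ D)).card := by
    apply Finset.card_le_card_of_injOn (fun j => 2 ^ n * (2 * j + 1))
    · intro j hj
      simp only [Finset.mem_coe, Finset.mem_filter, Finset.mem_range] at hj ⊢
      refine ⟨?_, hj.2⟩
      have hj1 : 2 * j + 1 < 2 * (s + 1) := by omega
      calc 2 ^ n * (2 * j + 1) < 2 ^ n * (2 * (s + 1)) :=
            mul_lt_mul_of_pos_left hj1 (pow_pos (by norm_num) n)
        _ = B := by rw [hBdef, pow_succ]; ring
    · intro a _ b _ hab
      have hab2 : 2 ^ n * (2 * a + 1) = 2 ^ n * (2 * b + 1) := hab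
      have := Nat.eq_of_mul_eq_mul_left (pow_pos (by norm_num) n) hab2
      omega
  have hcnt : psum v n s = ((Finset.range (s + 1)).filter
      (fun j => 2 ^ n * (2 * j + 1) ∈ C)).card := by
    rw [psum_eq, Finset.card_filter]
    refine Finset.sum_congr rfl fun j _ => ?_
    by_cases hx : 2 ^ n * (2 * j + 1) ∈ C
    · simp [hvdef, (hmemC _).1 hx, hx]
    · have hfx : fC (2 ^ n * (2 * j + 1)) = false := by
        rcases Bool.eq_false_or_eq_true (fC (2 ^ n * (2 * j + 1))) with hh | hh
        · exact absurd ((hmemC _).2 hh) hx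
        · exact hh
      simp [hvdef, hfx, hx]
  have hsplit : ((Finset.range (s + 1)).filter (fun j => 2 ^ n * (2 * j + 1) ∈ C)).card +
      ((Finset.range (s + 1)).filter (fun j => ¬(2 ^ n * (2 * j + 1) ∈ C))).card = s + 1 := by
    rw [Finset.card_filter_add_card_filter_not, Finset.card_range]
  by_cases hnA : n ∈ A
  · -- all elements of R_n are in RofSet A; non-C elements are errors
    have hsubD : ((Finset.range (s + 1)).filter (fun j => ¬(2 ^ n * (2 * j + 1) ∈ C))).card ≤
        ((Finset.range (s + 1)).filter (fun j => 2 ^ n * (2 * j + 1) ∈ D)).card := by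
      apply Finset.card_le_card
      intro j hj
      simp only [Finset.mem_filter, Finset.mem_range] at hj ⊢
      refine ⟨hj.1, Set.mem_symmDiff.2 (Or.inl ⟨?_, hj.2⟩)⟩
      exact (mem_RofSet_iff (p_mem_Rset n j)).2 hnA
    have hgoal : s + 1 < 2 * psum v n s := by
      rw [hcnt]; omega
    simp only [hgdef, decide_eq_true_eq]
    exact ⟨fun _ => hnA, fun _ => hgoal⟩
  · -- no element of R_n is in RofSet A; C elements are errors
    have hsubD : ((Finset.range (s + 1)).filter (fun j => 2 ^ n * (2 * j + 1) ∈ C)).card ≤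
        ((Finset.range (s + 1)).filter (fun j => 2 ^ n * (2 * j + 1) ∈ D)).card := by
      apply Finset.card_le_card
      intro j hj
      simp only [Finset.mem_filter, Finset.mem_range] at hj ⊢
      refine ⟨hj.1, Set.mem_symmDiff.2 (Or.inr ⟨hj.2, ?_⟩)⟩
      exact fun hmem => hnA ((mem_RofSet_iff (p_mem_Rset n j)).1 hmem)
    have hgoal : ¬(s + 1 < 2 * psum v n s) := by
      rw [hcnt]; omega
    simp only [hgdef, decide_eq_true_eq]
    exact ⟨fun hlt => absurd hlt hgoal, fun hmem => absurd hmem hnA⟩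


end Stmt11Aux

/-- `R(A)` is coarsely computable iff `A` is limit computable. -/
theorem stmt11 (A : Set ℕ) :
    CoarselyComputable (RofSet A) ↔ LimitComputable A :=
  ⟨Stmt11Aux.forward, Stmt11Aux.backward⟩
end
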